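/- Let D be an integral domain with quotient field K, let S be a set of monic polynomials of degree n in D[X], and let f(X) = g(X)/d ∈ K[X] with g ∈ D[X], d ∈ D nonzero. Then f ∈ Int(M_n^S(D)) (i.e., f(M) ∈ M_n(D) for every n×n matrix M over D whose characteristic polynomial lies in S) if and only if g(X) is divisible modulo dD[X] by every p ∈ S, i.e., g ∈ (p(X)) + dD[X] for all p ∈ S. -/

import Mathlib

open Polynomial Matrix

/-- The companion-type matrix of a monic polynomial `p`: the matrix of multiplication by
`root p` on `AdjoinRoot p` in the power basis. -/
noncomputable def companionAux {R : Type*} [CommRing R] {p : R[X]} (hp : p.Monic) :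
    Matrix (Fin p.natDegree) (Fin p.natDegree) R :=
  Algebra.leftMulMatrix (AdjoinRoot.powerBasis' hp).basis (AdjoinRoot.root p)

lemma companionAux_apply {R : Type*} [CommRing R] {p : R[X]} (hp : p.Monic)
    (i j : Fin p.natDegree) :
    companionAux hp i j = ((X ^ ((j : ℕ) + 1)) %ₘ p).coeff i := by
  rw [companionAux]
  refine (Algebra.leftMulMatrix_eq_repr_mul (AdjoinRoot.powerBasis' hp).basis
    (AdjoinRoot.root p) i j).trans ?_
  have hb : (AdjoinRoot.powerBasis' hp).basis j = AdjoinRoot.root p ^ (j : ℕ) := by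
    rw [(AdjoinRoot.powerBasis' hp).basis_eq_pow j, AdjoinRoot.powerBasis'_gen]
  rw [hb]
  have : AdjoinRoot.root p * AdjoinRoot.root p ^ (j : ℕ)
      = AdjoinRoot.mk p (X ^ ((j : ℕ) + 1)) := by
    rw [map_pow, AdjoinRoot.mk_X, pow_succ']
  rw [this]
  exact (AdjoinRoot.powerBasisAux'_repr_apply_to_fun hp
    (AdjoinRoot.mk p (X ^ ((j : ℕ) + 1))) i).trans (by rw [AdjoinRoot.modByMonicHom_mk])

lemma companionAux_charpoly_field {K : Type*} [Field K] {p : K[X]} (hp : p.Monic) :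
    (companionAux hp).charpoly = p := by
  have h := charpoly_leftMulMatrix (AdjoinRoot.powerBasis' hp)
  rw [AdjoinRoot.powerBasis'_gen] at h
  rw [companionAux]
  refine h.trans ?_
  rw [AdjoinRoot.minpoly_root hp.ne_zero, hp.leadingCoeff, inv_one, Polynomial.C_1,
    mul_one]

lemma companionAux_charpoly {D : Type*} [CommRing D] [IsDomain D] {p : D[X]} (hp : p.Monic) :
    (companionAux hp).charpoly = p := by
  classical
  set K := FractionRing D
  have φinj : Function.Injective (algebraMap D K) := IsFractionRing.injective D K
  apply Polynomial.map_injective (algebraMap D K) φinj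
  rw [← Matrix.charpoly_map]
  have hpm : (p.map (algebraMap D K)).Monic := hp.map _
  let e : Fin (p.map (algebraMap D K)).natDegree ≃ Fin p.natDegree :=
    finCongr (hp.natDegree_map _)
  have hmap : (companionAux hp).map (algebraMap D K) = Matrix.reindex e e (companionAux hpm) := by
    ext i j
    rw [Matrix.map_apply, Matrix.reindex_apply, Matrix.submatrix_apply,
      companionAux_apply, companionAux_apply, ← Polynomial.coeff_map,
      Polynomial.map_modByMonic _ hp, Polynomial.map_pow, Polynomial.map_X]
    simp [e]
  rw [hmap, Matrix.charpoly_reindex, companionAux_charpoly_field hpm]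

lemma aeval_matrix_map {D K : Type*} [CommRing D] [CommRing K] (φ : D →+* K)
    {m : Type*} [Fintype m] [DecidableEq m] (M : Matrix m m D) (g : D[X]) :
    Polynomial.aeval (M.map φ) (g.map φ) = (Polynomial.aeval M g).map φ := by
  rw [aeval_def, eval₂_map, aeval_def]
  have hcomp : (φ.mapMatrix : Matrix m m D →+* Matrix m m K).comp
      (algebraMap D (Matrix m m D)) = (algebraMap K (Matrix m m K)).comp φ := by
    refine RingHom.ext fun r => ?_
    ext i j
    simp [Matrix.algebraMap_matrix_apply, apply_ite φ]
  have := Polynomial.hom_eval₂ g (algebraMap D (Matrix m m D))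
    (φ.mapMatrix : Matrix m m D →+* Matrix m m K) M
  rw [hcomp] at this
  rw [show M.map φ = φ.mapMatrix M from rfl, ← this]
  rfl

/-- Let `D` be an integral domain with quotient field `K`, let `S` be a set
of monic polynomials of degree `n` in `D[X]`, and let `f = g/d ∈ K[X]` with `g ∈ D[X]` and
`d ∈ D` nonzero.  Then `f ∈ Int(M_n^S(D))`, i.e. `f(M)` has all entries in `D` for every
`n × n` matrix `M` over `D` whose characteristic polynomial lies in `S`, if and only if
`g` is divisible modulo `dD[X]` by every `p ∈ S`, i.e. `g ∈ (p) + dD[X]` for all `p ∈ S`. -/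
theorem stmt_6 (D : Type*) [CommRing D] [IsDomain D] (K : Type*) [Field K]
    [Algebra D K] [IsFractionRing D K] (n : ℕ) (S : Set (Polynomial D))
    (hS : ∀ p ∈ S, p.Monic ∧ p.natDegree = n)
    (g : Polynomial D) (d : D) (hd : d ≠ 0) :
    (∀ M : Matrix (Fin n) (Fin n) D, M.charpoly ∈ S → ∀ i j : Fin n,
        (Polynomial.aeval (M.map (algebraMap D K))
          (Polynomial.C ((algebraMap D K d)⁻¹) * g.map (algebraMap D K))) i j
          ∈ (algebraMap D K).range) ↔
      ∀ p ∈ S, g ∈ Ideal.span ({p, Polynomial.C d} : Set (Polynomial D)) := by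
  classical
  have φinj : Function.Injective (algebraMap D K) := IsFractionRing.injective D K
  have hφd : algebraMap D K d ≠ 0 := fun h => hd (φinj (by rwa [map_zero]))
  have key : ∀ (M : Matrix (Fin n) (Fin n) D) (i j : Fin n),
      ((Polynomial.aeval (M.map (algebraMap D K))
        (Polynomial.C ((algebraMap D K d)⁻¹) * g.map (algebraMap D K))) i j
        ∈ (algebraMap D K).range) ↔ d ∣ (Polynomial.aeval M g) i j := by
    intro M i j
    have h1 : (Polynomial.aeval (M.map (algebraMap D K))
        (Polynomial.C ((algebraMap D K d)⁻¹) * g.map (algebraMap D K))) i j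
        = (algebraMap D K d)⁻¹ * algebraMap D K ((Polynomial.aeval M g) i j) := by
      rw [_root_.map_mul, aeval_C, aeval_matrix_map, ← Algebra.smul_def, Matrix.smul_apply,
        Matrix.map_apply, smul_eq_mul]
    rw [h1]
    constructor
    · rintro ⟨e, he⟩
      refine ⟨e, φinj ?_⟩
      rw [_root_.map_mul]
      field_simp at he ⊢
      rw [← he]
    · rintro ⟨e, he⟩
      refine ⟨e, ?_⟩
      rw [he, _root_.map_mul]
      field_simp
  constructor
  · intro H p hp
    obtain ⟨hpm, hpn⟩ := hS p hp
    rcases Nat.eq_zero_or_pos n with hn | hn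
    · have hp1 : p = 1 := hpm.natDegree_eq_zero.mp (hpn.trans hn)
      rw [hp1]
      exact Ideal.mem_span_pair.mpr ⟨g, 0, by ring⟩
    · let e : Fin p.natDegree ≃ Fin n := finCongr hpn
      set M0 := companionAux hpm with hM0
      set M : Matrix (Fin n) (Fin n) D := Matrix.reindex e e M0 with hM
      have hMc : M.charpoly = p := by
        rw [hM, Matrix.charpoly_reindex, companionAux_charpoly]
      have haev : Polynomial.aeval M g = Matrix.reindex e e (Polynomial.aeval M0 g) :=
        Polynomial.aeval_algHom_apply (Matrix.reindexAlgEquiv (R := D) (A := D) e) M0 g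
      have j0 : Fin p.natDegree := ⟨0, hpn ▸ hn⟩
      have hcol : ∀ i : Fin p.natDegree,
          (Polynomial.aeval M0 g) i ⟨0, hpn ▸ hn⟩ = (g %ₘ p).coeff i := by
        intro i
        have h2 : Polynomial.aeval M0 g
            = Algebra.leftMulMatrix (AdjoinRoot.powerBasis' hpm).basis
              (Polynomial.aeval (AdjoinRoot.root p) g) :=
          Polynomial.aeval_algHom_apply (Algebra.leftMulMatrix
            (AdjoinRoot.powerBasis' hpm).basis) (AdjoinRoot.root p) g
        rw [h2, AdjoinRoot.aeval_eq]
        refine (Algebra.leftMulMatrix_eq_repr_mul (AdjoinRoot.powerBasis' hpm).basis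
          (AdjoinRoot.mk p g) i (⟨0, hpn ▸ hn⟩ : Fin p.natDegree)).trans ?_
        have hb : (AdjoinRoot.powerBasis' hpm).basis (⟨0, hpn ▸ hn⟩ : Fin p.natDegree) = 1 := by
          refine ((AdjoinRoot.powerBasis' hpm).basis_eq_pow _).trans ?_
          simp
        rw [hb, mul_one]
        exact (AdjoinRoot.powerBasisAux'_repr_apply_to_fun hpm (AdjoinRoot.mk p g) i).trans
          (by rw [AdjoinRoot.modByMonicHom_mk])
      have hdvd : ∀ k, d ∣ (g %ₘ p).coeff k := by
        intro k
        by_cases hk : k < p.natDegree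
        · have := (key M (e ⟨k, hk⟩) (e ⟨0, hpn ▸ hn⟩)).mp
            (H M (hMc ▸ hp) (e ⟨k, hk⟩) (e ⟨0, hpn ▸ hn⟩))
          rw [haev, Matrix.reindex_apply, Matrix.submatrix_apply,
            Equiv.symm_apply_apply, Equiv.symm_apply_apply, hcol] at this
          exact this
        · have hdeg : (g %ₘ p).degree < p.degree := degree_modByMonic_lt g hpm
          rw [coeff_eq_zero_of_degree_lt (lt_of_lt_of_le hdeg ?_)]
          · exact dvd_zero d
          · rw [degree_eq_natDegree hpm.ne_zero]
            exact_mod_cast Nat.le_of_not_lt hk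
      obtain ⟨r, hr⟩ := (Polynomial.C_dvd_iff_dvd_coeff d (g %ₘ p)).mpr hdvd
      refine Ideal.mem_span_pair.mpr ⟨g /ₘ p, r, ?_⟩
      rw [mul_comm (g /ₘ p) p, mul_comm r (C d), ← hr, add_comm, modByMonic_add_div g p]
  · intro H M hMS i j
    rw [key]
    obtain ⟨a, b, hab⟩ := Ideal.mem_span_pair.mp (H M.charpoly hMS)
    have h0 : Polynomial.aeval M g = d • Polynomial.aeval M b := by
      rw [← hab, _root_.map_add, _root_.map_mul, _root_.map_mul, Matrix.aeval_self_charpoly,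
        mul_zero, zero_add, aeval_C, ← Algebra.commutes, ← Algebra.smul_def]
    rw [h0, Matrix.smul_apply]
    exact Dvd.intro _ rfl
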